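/- Assume p ∈ (1/2, 1). With the notation of the CEV scale data, the function ψ is three times differentiable on (0,1) and sup_{x∈(0,1)} ( x^{2p−1} |ψ'(x)| + x^{2p} |ψ''(x)| + x^{2p+1} |ψ'''(x)| ) < ∞. -/

import Mathlib

open MeasureTheory Set intervalIntegral

/-- The scale density `s(x) = exp(−(2μ/(σ²(2−2p))) x^{2−2p})` of the CEV diffusion. -/
noncomputable def sDen (μ σ p : ℝ) (x : ℝ) : ℝ :=
  Real.exp (-(2 * μ / (σ ^ 2 * (2 - 2 * p))) * x ^ (2 - 2 * p))

/-- The scale function `S(x) = ∫₀ˣ s(z) dz` of the CEV diffusion. -/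
noncomputable def Sfun (μ σ p : ℝ) (x : ℝ) : ℝ := ∫ z in (0 : ℝ)..x, sDen μ σ p z

/-- The speed density `m(y) = 1/(σ² y^{2p} s(y))` of the CEV diffusion. -/
noncomputable def mDen (μ σ p : ℝ) (y : ℝ) : ℝ := 1 / (σ ^ 2 * y ^ (2 * p) * sDen μ σ p y)

/-- `φ(x) = S(x)/S(1)`, the probability that the CEV diffusion started at `x` reaches
`1` before `0`. -/
noncomputable def phiFun (μ σ p : ℝ) (x : ℝ) : ℝ := Sfun μ σ p x / Sfun μ σ p 1

/-- `ψ(x) = 2 φ(x) ∫ₓ¹ (S(1) − S(y)) m(y) dy + 2 (1 − φ(x)) ∫₀ˣ S(y) m(y) dy`, the expectation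
of the exit time of the CEV diffusion from `(0,1)` started at `x`. -/
noncomputable def psiFun (μ σ p : ℝ) (x : ℝ) : ℝ :=
  2 * phiFun μ σ p x * (∫ y in x..(1 : ℝ), (Sfun μ σ p 1 - Sfun μ σ p y) * mDen μ σ p y)
    + 2 * (1 - phiFun μ σ p x) * (∫ y in (0 : ℝ)..x, Sfun μ σ p y * mDen μ σ p y)

namespace CEVA2

noncomputable def kk (μ σ p : ℝ) : ℝ := 2 * μ / (σ ^ 2 * (2 - 2 * p))
noncomputable def bigM (μ σ p : ℝ) : ℝ := Real.exp |kk μ σ p|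
noncomputable def smallm (μ σ p : ℝ) : ℝ := Real.exp (-|kk μ σ p|)

variable {μ σ p : ℝ}

lemma sDen_eq (x : ℝ) : sDen μ σ p x = Real.exp (-(kk μ σ p) * x ^ (2 - 2 * p)) := rfl

lemma sDen_pos (x : ℝ) : 0 < sDen μ σ p x := Real.exp_pos _

lemma bigM_pos : 0 < bigM μ σ p := Real.exp_pos _
lemma smallm_pos : 0 < smallm μ σ p := Real.exp_pos _

lemma continuous_sDen (hp1 : p < 1) : Continuous (sDen μ σ p) := by
  have h : Continuous fun x : ℝ => x ^ (2 - 2 * p) := by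
    rw [continuous_iff_continuousAt]
    exact fun x => Real.continuousAt_rpow_const x _ (Or.inr (by linarith))
  exact Real.continuous_exp.comp (continuous_const.mul h)

lemma sDen_le (hp1 : p < 1) {x : ℝ} (hx : x ∈ Icc (0:ℝ) 1) : sDen μ σ p x ≤ bigM μ σ p := by
  rw [sDen_eq, bigM]
  apply Real.exp_le_exp.mpr
  have h1 : 0 ≤ x ^ (2 - 2 * p) := Real.rpow_nonneg hx.1 _
  have h2 : x ^ (2 - 2 * p) ≤ 1 := Real.rpow_le_one hx.1 hx.2 (by linarith)
  nlinarith [neg_abs_le (kk μ σ p), le_abs_self (kk μ σ p), abs_nonneg (kk μ σ p)]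

lemma smallm_le_sDen (hp1 : p < 1) {x : ℝ} (hx : x ∈ Icc (0:ℝ) 1) :
    smallm μ σ p ≤ sDen μ σ p x := by
  rw [sDen_eq, smallm]
  apply Real.exp_le_exp.mpr
  have h1 : 0 ≤ x ^ (2 - 2 * p) := Real.rpow_nonneg hx.1 _
  have h2 : x ^ (2 - 2 * p) ≤ 1 := Real.rpow_le_one hx.1 hx.2 (by linarith)
  nlinarith [neg_abs_le (kk μ σ p), le_abs_self (kk μ σ p), abs_nonneg (kk μ σ p)]

lemma hasDerivAt_Sfun (hp1 : p < 1) (x : ℝ) : HasDerivAt (Sfun μ σ p) (sDen μ σ p x) x :=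
  intervalIntegral.integral_hasDerivAt_right ((continuous_sDen hp1).intervalIntegrable _ _)
    ((continuous_sDen hp1).stronglyMeasurableAtFilter _ _) (continuous_sDen hp1).continuousAt

lemma continuous_Sfun (hp1 : p < 1) : Continuous (Sfun μ σ p) := by
  have : Differentiable ℝ (Sfun μ σ p) := fun x => (hasDerivAt_Sfun hp1 x).differentiableAt
  exact this.continuous

lemma Sfun_nonneg (hp1 : p < 1) {x : ℝ} (hx : 0 ≤ x) : 0 ≤ Sfun μ σ p x :=
  intervalIntegral.integral_nonneg hx fun y _ => (sDen_pos y).le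

lemma Sfun_mono (hp1 : p < 1) {x y : ℝ} (hxy : x ≤ y) : Sfun μ σ p x ≤ Sfun μ σ p y := by
  have h : (∫ z in (0:ℝ)..x, sDen μ σ p z) + (∫ z in x..y, sDen μ σ p z)
      = ∫ z in (0:ℝ)..y, sDen μ σ p z :=
    intervalIntegral.integral_add_adjacent_intervals
      ((continuous_sDen hp1).intervalIntegrable 0 x)
      ((continuous_sDen hp1).intervalIntegrable x y)
  have h2 : 0 ≤ ∫ z in x..y, sDen μ σ p z :=
    intervalIntegral.integral_nonneg hxy fun z _ => (sDen_pos z).le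
  unfold Sfun
  rw [← h]
  linarith

lemma Sfun_le (hp1 : p < 1) {x : ℝ} (hx : x ∈ Icc (0:ℝ) 1) :
    Sfun μ σ p x ≤ bigM μ σ p * x := by
  have h : Sfun μ σ p x ≤ ∫ _z in (0:ℝ)..x, bigM μ σ p := by
    apply intervalIntegral.integral_mono_on hx.1 ((continuous_sDen hp1).intervalIntegrable _ _)
      intervalIntegrable_const
    intro y hy
    exact sDen_le hp1 ⟨hy.1, hy.2.trans hx.2⟩
  simpa [mul_comm] using h

lemma le_Sfun (hp1 : p < 1) {x : ℝ} (hx : x ∈ Icc (0:ℝ) 1) :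
    smallm μ σ p * x ≤ Sfun μ σ p x := by
  have h : (∫ _z in (0:ℝ)..x, smallm μ σ p) ≤ Sfun μ σ p x := by
    apply intervalIntegral.integral_mono_on hx.1 intervalIntegrable_const
      ((continuous_sDen hp1).intervalIntegrable _ _)
    intro y hy
    exact smallm_le_sDen hp1 ⟨hy.1, hy.2.trans hx.2⟩
  simpa [mul_comm] using h

lemma Sfun_pos (hp1 : p < 1) {x : ℝ} (hx : x ∈ Ioc (0:ℝ) 1) : 0 < Sfun μ σ p x :=
  lt_of_lt_of_le (by have := smallm_pos (μ := μ) (σ := σ) (p := p); nlinarith [hx.1])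
    (le_Sfun hp1 ⟨hx.1.le, hx.2⟩)

lemma Sfun_one_pos (hp1 : p < 1) : 0 < Sfun μ σ p 1 :=
  Sfun_pos hp1 ⟨one_pos, le_refl 1⟩

lemma mDen_nonneg {y : ℝ} (hy : 0 ≤ y) : 0 ≤ mDen μ σ p y := by
  unfold mDen
  apply one_div_nonneg.mpr
  exact mul_nonneg (mul_nonneg (sq_nonneg σ) (Real.rpow_nonneg hy _)) (sDen_pos y).le

lemma continuousAt_mDen (hσ : 0 < σ) (hp1 : p < 1) {y : ℝ} (hy : 0 < y) :
    ContinuousAt (mDen μ σ p) y := by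
  have h1 : ContinuousAt (fun z : ℝ => z ^ (2 * p)) y :=
    Real.continuousAt_rpow_const _ _ (Or.inl hy.ne')
  have hden : ContinuousAt (fun z : ℝ => σ ^ 2 * z ^ (2 * p) * sDen μ σ p z) y :=
    (continuousAt_const.mul h1).mul (continuous_sDen hp1).continuousAt
  have hne : σ ^ 2 * y ^ (2 * p) * sDen μ σ p y ≠ 0 := by
    have := Real.rpow_pos_of_pos hy (2 * p)
    have := sDen_pos (μ := μ) (σ := σ) (p := p) y
    positivity
  exact continuousAt_const.div hden hne

lemma mDen_le (hσ : 0 < σ) (hp1 : p < 1) {y : ℝ} (hy : y ∈ Ioc (0:ℝ) 1) :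
    mDen μ σ p y ≤ 1 / (σ ^ 2 * smallm μ σ p) * y ^ (-(2 * p)) := by
  have h0 : 0 < y ^ (2 * p) := Real.rpow_pos_of_pos hy.1 _
  have hs := smallm_le_sDen (μ := μ) (σ := σ) hp1 ⟨hy.1.le, hy.2⟩
  have hsm := smallm_pos (μ := μ) (σ := σ) (p := p)
  have key : mDen μ σ p y ≤ 1 / (σ ^ 2 * y ^ (2 * p) * smallm μ σ p) := by
    unfold mDen
    apply one_div_le_one_div_of_le (by positivity)
    exact mul_le_mul_of_nonneg_left hs (by positivity)
  refine key.trans (le_of_eq ?_)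
  rw [Real.rpow_neg hy.1.le]
  field_simp


noncomputable def Ffun (μ σ p : ℝ) (x : ℝ) : ℝ :=
  (∫ y in x..(1:ℝ), (Sfun μ σ p 1 - Sfun μ σ p y) * mDen μ σ p y)
    - ∫ y in (0:ℝ)..x, Sfun μ σ p y * mDen μ σ p y

noncomputable def sd1 (μ σ p : ℝ) (x : ℝ) : ℝ := -(2*μ/σ^2) * x ^ (1-2*p) * sDen μ σ p x

noncomputable def sd2 (μ σ p : ℝ) (x : ℝ) : ℝ :=
  -(2*μ/σ^2) * ((1-2*p) * x ^ (-(2*p)) * sDen μ σ p x + x ^ (1-2*p) * sd1 μ σ p x)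

noncomputable def g1 (μ σ p : ℝ) (x : ℝ) : ℝ := 2 / Sfun μ σ p 1 * (sDen μ σ p x * Ffun μ σ p x)

noncomputable def g2 (μ σ p : ℝ) (x : ℝ) : ℝ :=
  2 / Sfun μ σ p 1 * (sd1 μ σ p x * Ffun μ σ p x) - 2/σ^2 * x ^ (-(2*p))

noncomputable def g3 (μ σ p : ℝ) (x : ℝ) : ℝ :=
  2 / Sfun μ σ p 1 * (sd2 μ σ p x * Ffun μ σ p x + sd1 μ σ p x * (-(Sfun μ σ p 1) * mDen μ σ p x))
    - 2/σ^2 * (-(2*p) * x ^ (-(2*p)-1))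

lemma contOn_Sm (hσ : 0 < σ) (hp1 : p < 1) :
    ContinuousOn (fun y => Sfun μ σ p y * mDen μ σ p y) (Ioi (0:ℝ)) := fun y hy =>
  (((continuous_Sfun hp1).continuousAt).mul (continuousAt_mDen hσ hp1 hy)).continuousWithinAt

lemma contOn_S1m (hσ : 0 < σ) (hp1 : p < 1) :
    ContinuousOn (fun y => (Sfun μ σ p 1 - Sfun μ σ p y) * mDen μ σ p y) (Ioi (0:ℝ)) :=
  fun y hy =>
  ((continuousAt_const.sub (continuous_Sfun hp1).continuousAt).mul
    (continuousAt_mDen hσ hp1 hy)).continuousWithinAt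

lemma integrable_Sm (hσ : 0 < σ) (hp : 1/2 < p) (hp1 : p < 1) {x : ℝ} (hx : x ∈ Ioc (0:ℝ) 1) :
    IntervalIntegrable (fun y => Sfun μ σ p y * mDen μ σ p y) volume 0 x := by
  rw [intervalIntegrable_iff_integrableOn_Ioc_of_le hx.1.le]
  have hbint : IntervalIntegrable
      (fun y : ℝ => bigM μ σ p * (1/(σ^2 * smallm μ σ p)) * y ^ (1-2*p)) volume 0 x :=
    (intervalIntegrable_rpow' (by linarith)).const_mul _
  rw [intervalIntegrable_iff_integrableOn_Ioc_of_le hx.1.le] at hbint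
  apply hbint.mono'
  · exact ((contOn_Sm hσ hp1).mono Ioc_subset_Ioi_self).aestronglyMeasurable measurableSet_Ioc
  · filter_upwards [ae_restrict_mem measurableSet_Ioc] with y hy
    have hy1 : y ∈ Icc (0:ℝ) 1 := ⟨hy.1.le, hy.2.trans hx.2⟩
    rw [Real.norm_eq_abs,
      abs_of_nonneg (mul_nonneg (Sfun_nonneg hp1 hy.1.le) (mDen_nonneg hy.1.le))]
    have h1 : Sfun μ σ p y ≤ bigM μ σ p * y := Sfun_le hp1 hy1
    have h2 : mDen μ σ p y ≤ 1/(σ^2 * smallm μ σ p) * y ^ (-(2*p)) :=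
      mDen_le hσ hp1 ⟨hy.1, hy.2.trans hx.2⟩
    calc Sfun μ σ p y * mDen μ σ p y
        ≤ (bigM μ σ p * y) * (1/(σ^2 * smallm μ σ p) * y ^ (-(2*p))) :=
          mul_le_mul h1 h2 (mDen_nonneg hy.1.le) (mul_nonneg bigM_pos.le hy.1.le)
      _ = bigM μ σ p * (1/(σ^2 * smallm μ σ p)) * (y ^ (1:ℝ) * y ^ (-(2*p))) := by
          rw [Real.rpow_one]; ring
      _ = bigM μ σ p * (1/(σ^2 * smallm μ σ p)) * y ^ (1-2*p) := by
          rw [← Real.rpow_add hy.1, show (1:ℝ) + -(2*p) = 1-2*p by ring]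

lemma integrable_S1m (hσ : 0 < σ) (hp1 : p < 1) {x : ℝ} (hx0 : 0 < x) (hx1 : x ≤ 1) :
    IntervalIntegrable (fun y => (Sfun μ σ p 1 - Sfun μ σ p y) * mDen μ σ p y) volume x 1 := by
  apply ContinuousOn.intervalIntegrable
  apply (contOn_S1m hσ hp1).mono
  rw [uIcc_of_le hx1]
  exact fun y hy => lt_of_lt_of_le hx0 hy.1

lemma hasDerivAt_I1 (hσ : 0 < σ) (hp1 : p < 1) {x : ℝ} (hx : x ∈ Ioo (0:ℝ) 1) :
    HasDerivAt (fun u => ∫ y in u..(1:ℝ), (Sfun μ σ p 1 - Sfun μ σ p y) * mDen μ σ p y)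
      (-((Sfun μ σ p 1 - Sfun μ σ p x) * mDen μ σ p x)) x :=
  intervalIntegral.integral_hasDerivAt_left (integrable_S1m hσ hp1 hx.1 hx.2.le)
    ((contOn_S1m hσ hp1).stronglyMeasurableAtFilter isOpen_Ioi x hx.1)
    ((contOn_S1m hσ hp1).continuousAt (Ioi_mem_nhds hx.1))

lemma hasDerivAt_I2 (hσ : 0 < σ) (hp : 1/2 < p) (hp1 : p < 1) {x : ℝ} (hx : x ∈ Ioo (0:ℝ) 1) :
    HasDerivAt (fun u => ∫ y in (0:ℝ)..u, Sfun μ σ p y * mDen μ σ p y)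
      (Sfun μ σ p x * mDen μ σ p x) x :=
  intervalIntegral.integral_hasDerivAt_right (integrable_Sm hσ hp hp1 ⟨hx.1, hx.2.le⟩)
    ((contOn_Sm hσ hp1).stronglyMeasurableAtFilter isOpen_Ioi x hx.1)
    ((contOn_Sm hσ hp1).continuousAt (Ioi_mem_nhds hx.1))

lemma hasDerivAt_Ffun (hσ : 0 < σ) (hp : 1/2 < p) (hp1 : p < 1) {x : ℝ} (hx : x ∈ Ioo (0:ℝ) 1) :
    HasDerivAt (Ffun μ σ p) (-(Sfun μ σ p 1) * mDen μ σ p x) x := by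
  have h := (hasDerivAt_I1 (μ := μ) hσ hp1 hx).sub (hasDerivAt_I2 (μ := μ) hσ hp hp1 hx)
  refine h.congr_deriv ?_
  ring

lemma hasDerivAt_psiFun (hσ : 0 < σ) (hp : 1/2 < p) (hp1 : p < 1) {x : ℝ}
    (hx : x ∈ Ioo (0:ℝ) 1) : HasDerivAt (psiFun μ σ p) (g1 μ σ p x) x := by
  have hS1 : 0 < Sfun μ σ p 1 := Sfun_one_pos hp1
  have hS := hasDerivAt_Sfun (μ := μ) (σ := σ) hp1 x
  have hphi : HasDerivAt (phiFun μ σ p) (sDen μ σ p x / Sfun μ σ p 1) x := hS.div_const _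
  have hA := hasDerivAt_I1 (μ := μ) hσ hp1 hx
  have hB := hasDerivAt_I2 (μ := μ) hσ hp hp1 hx
  have h := ((hphi.const_mul 2).mul hA).add
    ((((hasDerivAt_const x (1:ℝ)).sub hphi).const_mul 2).mul hB)
  refine h.congr_deriv ?_
  simp only [g1, Ffun, phiFun, Pi.sub_apply]
  field_simp
  ring


lemma hasDerivAt_sDen (hσ : 0 < σ) (hp1 : p < 1) {x : ℝ} (hx : 0 < x) :
    HasDerivAt (sDen μ σ p) (sd1 μ σ p x) x := by
  have h : HasDerivAt (fun x : ℝ => x ^ (2-2*p)) ((2-2*p) * x ^ (2-2*p-1)) x :=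
    Real.hasDerivAt_rpow_const (Or.inl hx.ne')
  have h2 := (h.const_mul (-(2 * μ / (σ ^ 2 * (2 - 2 * p))))).exp
  refine h2.congr_deriv ?_
  rw [sd1, show (2-2*p-1 : ℝ) = 1-2*p by ring]
  have hσ' : σ ≠ 0 := hσ.ne'
  have h2p : (2-2*p : ℝ) ≠ 0 := by linarith
  have h1p : (1-p : ℝ) ≠ 0 := by linarith
  rw [sDen]
  field_simp

lemma hasDerivAt_sd1 (hσ : 0 < σ) (hp1 : p < 1) {x : ℝ} (hx : 0 < x) :
    HasDerivAt (sd1 μ σ p) (sd2 μ σ p x) x := by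
  have h : HasDerivAt (fun x : ℝ => x ^ (1-2*p)) ((1-2*p) * x ^ (1-2*p-1)) x :=
    Real.hasDerivAt_rpow_const (Or.inl hx.ne')
  have h2 := (h.const_mul (-(2*μ/σ^2))).mul (hasDerivAt_sDen (μ := μ) hσ hp1 hx)
  refine h2.congr_deriv ?_
  rw [sd2, sd1, show (1-2*p-1 : ℝ) = -(2*p) by ring]
  ring

lemma hasDerivAt_g1 (hσ : 0 < σ) (hp : 1/2 < p) (hp1 : p < 1) {x : ℝ} (hx : x ∈ Ioo (0:ℝ) 1) :
    HasDerivAt (g1 μ σ p) (g2 μ σ p x) x := by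
  have h := ((hasDerivAt_sDen (μ := μ) hσ hp1 hx.1).mul
    (hasDerivAt_Ffun (μ := μ) hσ hp hp1 hx)).const_mul (2 / Sfun μ σ p 1)
  refine h.congr_deriv ?_
  have hS1 : (0:ℝ) < Sfun μ σ p 1 := Sfun_one_pos hp1
  have hsm : sDen μ σ p x * mDen μ σ p x = x ^ (-(2*p)) / σ ^ 2 := by
    rw [mDen, Real.rpow_neg hx.1.le]
    have h1 : (0:ℝ) < x ^ (2*p) := Real.rpow_pos_of_pos hx.1 _
    have h2 : (0:ℝ) < sDen μ σ p x := sDen_pos x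
    field_simp
  rw [g2]
  have : 2 / Sfun μ σ p 1 * (sd1 μ σ p x * Ffun μ σ p x
      + sDen μ σ p x * (-Sfun μ σ p 1 * mDen μ σ p x))
      = 2 / Sfun μ σ p 1 * (sd1 μ σ p x * Ffun μ σ p x)
        - 2 * (sDen μ σ p x * mDen μ σ p x) := by
    field_simp
    ring
  rw [this, hsm]
  ring

lemma hasDerivAt_g2 (hσ : 0 < σ) (hp : 1/2 < p) (hp1 : p < 1) {x : ℝ} (hx : x ∈ Ioo (0:ℝ) 1) :
    HasDerivAt (g2 μ σ p) (g3 μ σ p x) x := by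
  have hpow : HasDerivAt (fun x : ℝ => x ^ (-(2*p))) (-(2*p) * x ^ (-(2*p)-1)) x :=
    Real.hasDerivAt_rpow_const (Or.inl hx.1.ne')
  exact (((hasDerivAt_sd1 (μ := μ) hσ hp1 hx.1).mul
    (hasDerivAt_Ffun (μ := μ) hσ hp hp1 hx)).const_mul (2 / Sfun μ σ p 1)).sub
    (hpow.const_mul (2/σ^2))

lemma deriv_psiFun_eqOn (hσ : 0 < σ) (hp : 1/2 < p) (hp1 : p < 1) :
    ∀ x ∈ Ioo (0:ℝ) 1, deriv (psiFun μ σ p) x = g1 μ σ p x := fun _x hx =>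
  (hasDerivAt_psiFun hσ hp hp1 hx).deriv

lemma ev1 (hσ : 0 < σ) (hp : 1/2 < p) (hp1 : p < 1) {x : ℝ} (hx : x ∈ Ioo (0:ℝ) 1) :
    deriv (psiFun μ σ p) =ᶠ[nhds x] g1 μ σ p :=
  Filter.eventuallyEq_of_mem (Ioo_mem_nhds hx.1 hx.2) (deriv_psiFun_eqOn hσ hp hp1)

lemma deriv2_psiFun (hσ : 0 < σ) (hp : 1/2 < p) (hp1 : p < 1) {x : ℝ} (hx : x ∈ Ioo (0:ℝ) 1) :
    deriv (deriv (psiFun μ σ p)) x = g2 μ σ p x := by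
  rw [(ev1 hσ hp hp1 hx).deriv_eq]
  exact (hasDerivAt_g1 hσ hp hp1 hx).deriv

lemma ev2 (hσ : 0 < σ) (hp : 1/2 < p) (hp1 : p < 1) {x : ℝ} (hx : x ∈ Ioo (0:ℝ) 1) :
    deriv (deriv (psiFun μ σ p)) =ᶠ[nhds x] g2 μ σ p :=
  Filter.eventuallyEq_of_mem (Ioo_mem_nhds hx.1 hx.2)
    (fun _y hy => deriv2_psiFun hσ hp hp1 hy)

lemma deriv3_psiFun (hσ : 0 < σ) (hp : 1/2 < p) (hp1 : p < 1) {x : ℝ} (hx : x ∈ Ioo (0:ℝ) 1) :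
    deriv (deriv (deriv (psiFun μ σ p))) x = g3 μ σ p x := by
  rw [(ev2 hσ hp hp1 hx).deriv_eq]
  exact (hasDerivAt_g2 hσ hp hp1 hx).deriv


lemma Ffun_bound (hσ : 0 < σ) (hp : 1/2 < p) (hp1 : p < 1) {x : ℝ} (hx : x ∈ Ioo (0:ℝ) 1) :
    |Ffun μ σ p x| ≤
      (Sfun μ σ p 1 * (1/(σ^2 * smallm μ σ p)) / (2*p-1)
        + bigM μ σ p * (1/(σ^2 * smallm μ σ p)) / (2-2*p)) * x ^ (1-2*p) := by
  set c0 : ℝ := 1/(σ^2 * smallm μ σ p) with hc0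
  have hc0pos : 0 < c0 := by rw [hc0]; exact one_div_pos.mpr (mul_pos (pow_pos hσ 2) smallm_pos)
  have hS1 : 0 < Sfun μ σ p 1 := Sfun_one_pos hp1
  have hbM : 0 < bigM μ σ p := bigM_pos
  have h2p1 : (0:ℝ) < 2*p-1 := by linarith
  have h22p : (0:ℝ) < 2-2*p := by linarith
  have h0mem : (0:ℝ) ∉ uIcc x 1 := by
    rw [Set.uIcc_of_le hx.2.le]
    exact fun h => absurd h.1 (not_le.mpr hx.1)
  have ht1 : (1:ℝ) ≤ x ^ (1-2*p) :=
    Real.one_le_rpow_of_pos_of_le_one_of_nonpos hx.1 hx.2.le (by linarith)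
  -- first integral
  have hg1int : IntervalIntegrable (fun y : ℝ => Sfun μ σ p 1 * c0 * y ^ (-(2*p))) volume x 1 :=
    (intervalIntegrable_rpow (Or.inr h0mem)).const_mul _
  have hI1 : |∫ y in x..(1:ℝ), (Sfun μ σ p 1 - Sfun μ σ p y) * mDen μ σ p y|
      ≤ |∫ y in x..(1:ℝ), Sfun μ σ p 1 * c0 * y ^ (-(2*p))| := by
    rw [← Real.norm_eq_abs (∫ y in x..(1:ℝ), (Sfun μ σ p 1 - Sfun μ σ p y) * mDen μ σ p y)]
    apply intervalIntegral.norm_integral_le_abs_of_norm_le _ hg1int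
    filter_upwards [ae_restrict_mem measurableSet_uIoc] with y hy
    rw [Set.uIoc_of_le hx.2.le] at hy
    have hy0 : 0 < y := hx.1.trans hy.1
    have hSy : 0 ≤ Sfun μ σ p y := Sfun_nonneg hp1 hy0.le
    have hmono : Sfun μ σ p y ≤ Sfun μ σ p 1 := Sfun_mono hp1 hy.2
    rw [Real.norm_eq_abs, abs_of_nonneg (mul_nonneg (by linarith) (mDen_nonneg hy0.le))]
    calc (Sfun μ σ p 1 - Sfun μ σ p y) * mDen μ σ p y
        ≤ Sfun μ σ p 1 * (c0 * y ^ (-(2*p))) := by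
          apply mul_le_mul (by linarith) (mDen_le hσ hp1 ⟨hy0, hy.2⟩)
            (mDen_nonneg hy0.le) hS1.le
      _ = Sfun μ σ p 1 * c0 * y ^ (-(2*p)) := by ring
  have hval1 : (∫ y in x..(1:ℝ), Sfun μ σ p 1 * c0 * y ^ (-(2*p)))
      = Sfun μ σ p 1 * c0 * ((x ^ (1-2*p) - 1)/(2*p-1)) := by
    rw [intervalIntegral.integral_const_mul,
      integral_rpow (Or.inr ⟨by intro h; linarith, h0mem⟩)]
    rw [show -(2*p)+1 = 1-2*p by ring, Real.one_rpow]
    have key : (1 - x ^ (1-2*p))/(1-2*p) = (x ^ (1-2*p) - 1)/(2*p-1) := by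
      rw [div_eq_div_iff (by linarith) (by linarith)]
      ring
    rw [key]
  have habs1 : |∫ y in x..(1:ℝ), Sfun μ σ p 1 * c0 * y ^ (-(2*p))|
      = Sfun μ σ p 1 * c0 * ((x ^ (1-2*p) - 1)/(2*p-1)) := by
    rw [hval1]
    exact abs_of_nonneg (mul_nonneg (mul_nonneg hS1.le hc0pos.le)
      (div_nonneg (by linarith) (by linarith)))
  have hfin1 : |∫ y in x..(1:ℝ), (Sfun μ σ p 1 - Sfun μ σ p y) * mDen μ σ p y|
      ≤ Sfun μ σ p 1 * c0 / (2*p-1) * x ^ (1-2*p) := by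
    rw [habs1] at hI1
    refine hI1.trans ?_
    rw [show Sfun μ σ p 1 * c0 / (2*p-1) * x ^ (1-2*p)
      = Sfun μ σ p 1 * c0 * (x ^ (1-2*p) / (2*p-1)) by ring]
    exact mul_le_mul_of_nonneg_left ((div_le_div_iff_of_pos_right h2p1).mpr (by linarith))
      (mul_nonneg hS1.le hc0pos.le)
  -- second integral
  have hg2int : IntervalIntegrable (fun y : ℝ => bigM μ σ p * c0 * y ^ (1-2*p)) volume 0 x :=
    (intervalIntegrable_rpow' (by linarith)).const_mul _
  have hI2 : |∫ y in (0:ℝ)..x, Sfun μ σ p y * mDen μ σ p y|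
      ≤ |∫ y in (0:ℝ)..x, bigM μ σ p * c0 * y ^ (1-2*p)| := by
    rw [← Real.norm_eq_abs (∫ y in (0:ℝ)..x, Sfun μ σ p y * mDen μ σ p y)]
    apply intervalIntegral.norm_integral_le_abs_of_norm_le _ hg2int
    filter_upwards [ae_restrict_mem measurableSet_uIoc] with y hy
    rw [Set.uIoc_of_le hx.1.le] at hy
    have hy1 : y ∈ Icc (0:ℝ) 1 := ⟨hy.1.le, hy.2.trans hx.2.le⟩
    rw [Real.norm_eq_abs,
      abs_of_nonneg (mul_nonneg (Sfun_nonneg hp1 hy.1.le) (mDen_nonneg hy.1.le))]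
    calc Sfun μ σ p y * mDen μ σ p y
        ≤ (bigM μ σ p * y) * (c0 * y ^ (-(2*p))) :=
          mul_le_mul (Sfun_le hp1 hy1) (mDen_le hσ hp1 ⟨hy.1, hy1.2⟩)
            (mDen_nonneg hy.1.le) (mul_nonneg hbM.le hy.1.le)
      _ = bigM μ σ p * c0 * (y ^ (1:ℝ) * y ^ (-(2*p))) := by rw [Real.rpow_one]; ring
      _ = bigM μ σ p * c0 * y ^ (1-2*p) := by
          rw [← Real.rpow_add hy.1, show (1:ℝ) + -(2*p) = 1-2*p by ring]
  have hval2 : (∫ y in (0:ℝ)..x, bigM μ σ p * c0 * y ^ (1-2*p))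
      = bigM μ σ p * c0 * (x ^ (2-2*p) / (2-2*p)) := by
    rw [intervalIntegral.integral_const_mul, integral_rpow (Or.inl (by linarith))]
    rw [show (1-2*p)+1 = 2-2*p by ring, Real.zero_rpow (by linarith : (2-2*p:ℝ) ≠ 0), sub_zero]
  have hfin2 : |∫ y in (0:ℝ)..x, Sfun μ σ p y * mDen μ σ p y|
      ≤ bigM μ σ p * c0 / (2-2*p) * x ^ (1-2*p) := by
    refine hI2.trans ?_
    rw [hval2, abs_of_nonneg (mul_nonneg (mul_nonneg hbM.le hc0pos.le)
      (div_nonneg (Real.rpow_nonneg hx.1.le _) h22p.le))]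
    rw [show bigM μ σ p * c0 / (2-2*p) * x ^ (1-2*p)
      = bigM μ σ p * c0 * (x ^ (1-2*p) / (2-2*p)) by ring]
    exact mul_le_mul_of_nonneg_left ((div_le_div_iff_of_pos_right h22p).mpr
      (Real.rpow_le_rpow_of_exponent_ge hx.1 hx.2.le (by linarith)))
      (mul_nonneg hbM.le hc0pos.le)
  calc |Ffun μ σ p x|
      ≤ |∫ y in x..(1:ℝ), (Sfun μ σ p 1 - Sfun μ σ p y) * mDen μ σ p y|
        + |∫ y in (0:ℝ)..x, Sfun μ σ p y * mDen μ σ p y| := abs_sub _ _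
    _ ≤ Sfun μ σ p 1 * c0 / (2*p-1) * x ^ (1-2*p)
        + bigM μ σ p * c0 / (2-2*p) * x ^ (1-2*p) := add_le_add hfin1 hfin2
    _ = (Sfun μ σ p 1 * c0 / (2*p-1) + bigM μ σ p * c0 / (2-2*p)) * x ^ (1-2*p) := by ring


set_option maxHeartbeats 1000000 in
lemma sup_bound (hσ : 0 < σ) (hp : 1/2 < p) (hp1 : p < 1) :
    ∃ C : ℝ, ∀ x ∈ Ioo (0:ℝ) 1,
      x ^ (2*p-1) * |g1 μ σ p x| + x ^ (2*p) * |g2 μ σ p x|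
        + x ^ (2*p+1) * |g3 μ σ p x| ≤ C := by
  have hS1 : 0 < Sfun μ σ p 1 := Sfun_one_pos hp1
  have hbM : 0 < bigM μ σ p := bigM_pos
  have hsm : 0 < smallm μ σ p := smallm_pos
  set S1 : ℝ := Sfun μ σ p 1 with hS1def
  set c0 : ℝ := 1/(σ^2 * smallm μ σ p) with hc0
  have hc0pos : 0 < c0 := by rw [hc0]; exact one_div_pos.mpr (mul_pos (pow_pos hσ 2) hsm)
  set CF : ℝ := S1 * c0 / (2*p-1) + bigM μ σ p * c0 / (2-2*p) with hCFdef
  have hCF : 0 ≤ CF := by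
    rw [hCFdef]
    have h1 : (0:ℝ) < 2*p-1 := by linarith
    have h2 : (0:ℝ) < 2-2*p := by linarith
    positivity
  set B1 : ℝ := 2*|μ|/σ^2 * bigM μ σ p with hB1def
  have hB1 : 0 ≤ B1 := by rw [hB1def]; positivity
  set D2 : ℝ := 2*|μ|/σ^2 * ((2*p-1) * bigM μ σ p + B1) with hD2def
  have hD2 : 0 ≤ D2 := by
    rw [hD2def]
    have h1 : (0:ℝ) < 2*p-1 := by linarith
    positivity
  have hdiv : 0 < 2/S1 := div_pos two_pos hS1
  refine ⟨2/S1 * bigM μ σ p * CF + (2/S1 * B1 * CF + 2/σ^2)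
    + (2/S1 * (D2 * CF + B1 * (S1 * c0)) + 2/σ^2 * (2*p)), fun x hx => ?_⟩
  have hxp : ∀ a : ℝ, 0 ≤ x ^ a := fun a => Real.rpow_nonneg hx.1.le a
  have hpow : ∀ a b : ℝ, x ^ a * x ^ b = x ^ (a+b) := fun a b => (Real.rpow_add hx.1 a b).symm
  have hxle1 : x ^ (2-2*p) ≤ 1 := Real.rpow_le_one hx.1.le hx.2.le (by linarith)
  have hF : |Ffun μ σ p x| ≤ CF * x ^ (1-2*p) := Ffun_bound hσ hp hp1 hx
  have hs_le : sDen μ σ p x ≤ bigM μ σ p := sDen_le hp1 ⟨hx.1.le, hx.2.le⟩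
  have hm0 : 0 ≤ mDen μ σ p x := mDen_nonneg hx.1.le
  have hm : mDen μ σ p x ≤ c0 * x ^ (-(2*p)) := mDen_le hσ hp1 ⟨hx.1, hx.2.le⟩
  have habsc : |(-(2*μ/σ^2) : ℝ)| = 2*|μ|/σ^2 := by
    rw [abs_neg, abs_div, abs_mul, abs_two, abs_pow, sq_abs]
  have hsd1 : |sd1 μ σ p x| ≤ B1 * x ^ (1-2*p) := by
    rw [sd1, abs_mul, abs_mul, habsc, abs_of_nonneg (hxp _),
      abs_of_nonneg (sDen_pos x).le]
    calc 2*|μ|/σ^2 * x ^ (1-2*p) * sDen μ σ p x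
        ≤ 2*|μ|/σ^2 * x ^ (1-2*p) * bigM μ σ p := by
          apply mul_le_mul_of_nonneg_left hs_le (mul_nonneg (by positivity) (hxp _))
      _ = B1 * x ^ (1-2*p) := by rw [hB1def]; ring
  have hsd2 : |sd2 μ σ p x| ≤ D2 * x ^ (-(2*p)) := by
    rw [sd2, abs_mul, habsc]
    have hinner : |(1-2*p) * x ^ (-(2*p)) * sDen μ σ p x + x ^ (1-2*p) * sd1 μ σ p x|
        ≤ (2*p-1) * x ^ (-(2*p)) * bigM μ σ p + x ^ (1-2*p) * (B1 * x ^ (1-2*p)) := by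
      refine (abs_add_le _ _).trans (add_le_add ?_ ?_)
      · rw [abs_mul, abs_mul, abs_of_neg (by linarith : (1-2*p:ℝ) < 0),
          abs_of_nonneg (hxp _), abs_of_nonneg (sDen_pos x).le,
          show -(1-2*p) = 2*p-1 by ring]
        apply mul_le_mul_of_nonneg_left hs_le
          (mul_nonneg (by linarith) (hxp _))
      · rw [abs_mul, abs_of_nonneg (hxp _)]
        exact mul_le_mul_of_nonneg_left hsd1 (hxp _)
    refine (mul_le_mul_of_nonneg_left hinner (by positivity)).trans ?_
    have key : x ^ (1-2*p) * (B1 * x ^ (1-2*p)) ≤ B1 * x ^ (-(2*p)) := by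
      calc x ^ (1-2*p) * (B1 * x ^ (1-2*p)) = B1 * (x ^ (1-2*p) * x ^ (1-2*p)) := by ring
        _ = B1 * (x ^ (-(2*p)) * x ^ (2-2*p)) := by
            rw [hpow, hpow, show (1-2*p) + (1-2*p) = -(2*p) + (2-2*p) by ring]
        _ ≤ B1 * (x ^ (-(2*p)) * 1) :=
            mul_le_mul_of_nonneg_left
              (mul_le_mul_of_nonneg_left hxle1 (hxp _)) hB1
        _ = B1 * x ^ (-(2*p)) := by ring
    calc 2*|μ|/σ^2 * ((2*p-1) * x ^ (-(2*p)) * bigM μ σ p + x ^ (1-2*p) * (B1 * x ^ (1-2*p)))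
        ≤ 2*|μ|/σ^2 * ((2*p-1) * x ^ (-(2*p)) * bigM μ σ p + B1 * x ^ (-(2*p))) :=
          mul_le_mul_of_nonneg_left (add_le_add_right key _) (by positivity)
      _ = D2 * x ^ (-(2*p)) := by rw [hD2def]; ring
  -- term 1
  have hg1 : |g1 μ σ p x| ≤ 2/S1 * (bigM μ σ p * (CF * x ^ (1-2*p))) := by
    rw [g1, abs_mul, abs_of_nonneg hdiv.le, abs_mul, abs_of_nonneg (sDen_pos x).le]
    exact mul_le_mul_of_nonneg_left
      (mul_le_mul hs_le hF (abs_nonneg _) hbM.le) hdiv.le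
  have T1 : x ^ (2*p-1) * |g1 μ σ p x| ≤ 2/S1 * bigM μ σ p * CF := by
    calc x ^ (2*p-1) * |g1 μ σ p x|
        ≤ x ^ (2*p-1) * (2/S1 * (bigM μ σ p * (CF * x ^ (1-2*p)))) :=
          mul_le_mul_of_nonneg_left hg1 (hxp _)
      _ = 2/S1 * bigM μ σ p * CF * (x ^ (2*p-1) * x ^ (1-2*p)) := by ring
      _ = 2/S1 * bigM μ σ p * CF := by
          rw [hpow, show 2*p-1 + (1-2*p) = 0 by ring, Real.rpow_zero, mul_one]
  -- term 2
  have hg2 : |g2 μ σ p x| ≤ 2/S1 * (B1 * x ^ (1-2*p) * (CF * x ^ (1-2*p)))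
      + 2/σ^2 * x ^ (-(2*p)) := by
    rw [g2]
    refine (abs_sub _ _).trans (add_le_add ?_ ?_)
    · rw [abs_mul, abs_of_nonneg hdiv.le, abs_mul]
      exact mul_le_mul_of_nonneg_left
        (mul_le_mul hsd1 hF (abs_nonneg _) (mul_nonneg hB1 (hxp _))) hdiv.le
    · rw [abs_mul, abs_of_nonneg (by positivity : (0:ℝ) ≤ 2/σ^2),
        abs_of_nonneg (hxp _)]
  have T2 : x ^ (2*p) * |g2 μ σ p x| ≤ 2/S1 * B1 * CF + 2/σ^2 := by
    calc x ^ (2*p) * |g2 μ σ p x|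
        ≤ x ^ (2*p) * (2/S1 * (B1 * x ^ (1-2*p) * (CF * x ^ (1-2*p)))
            + 2/σ^2 * x ^ (-(2*p))) := mul_le_mul_of_nonneg_left hg2 (hxp _)
      _ = 2/S1 * B1 * CF * (x ^ (2*p) * (x ^ (1-2*p) * x ^ (1-2*p)))
            + 2/σ^2 * (x ^ (2*p) * x ^ (-(2*p))) := by ring
      _ = 2/S1 * B1 * CF * x ^ (2-2*p) + 2/σ^2 := by
          rw [hpow, hpow, show (1-2*p) + (1-2*p) = 2-4*p by ring,
            show 2*p + (2-4*p) = 2-2*p by ring, hpow,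
            show 2*p + -(2*p) = 0 by ring, Real.rpow_zero, mul_one]
      _ ≤ 2/S1 * B1 * CF * 1 + 2/σ^2 :=
          add_le_add_left (mul_le_mul_of_nonneg_left hxle1
            (mul_nonneg (mul_nonneg hdiv.le hB1) hCF)) _
      _ = 2/S1 * B1 * CF + 2/σ^2 := by ring
  -- term 3
  have hg3 : |g3 μ σ p x| ≤ 2/S1 * (D2 * x ^ (-(2*p)) * (CF * x ^ (1-2*p))
      + B1 * x ^ (1-2*p) * (S1 * (c0 * x ^ (-(2*p)))))
      + 2/σ^2 * (2*p * x ^ (-(2*p)-1)) := by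
    rw [g3]
    refine (abs_sub _ _).trans (add_le_add ?_ ?_)
    · rw [abs_mul, abs_of_nonneg hdiv.le]
      apply mul_le_mul_of_nonneg_left _ hdiv.le
      refine (abs_add_le _ _).trans (add_le_add ?_ ?_)
      · rw [abs_mul]
        exact mul_le_mul hsd2 hF (abs_nonneg _) (mul_nonneg hD2 (hxp _))
      · rw [abs_mul, abs_mul, abs_neg, abs_of_nonneg hS1.le, abs_of_nonneg hm0]
        exact mul_le_mul hsd1 (mul_le_mul_of_nonneg_left hm hS1.le)
          (mul_nonneg hS1.le hm0) (mul_nonneg hB1 (hxp _))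
    · rw [abs_mul, abs_of_nonneg (by positivity : (0:ℝ) ≤ 2/σ^2), abs_mul,
        abs_neg, abs_of_nonneg (by linarith : (0:ℝ) ≤ 2*p), abs_of_nonneg (hxp _)]
  have T3 : x ^ (2*p+1) * |g3 μ σ p x|
      ≤ 2/S1 * (D2 * CF + B1 * (S1 * c0)) + 2/σ^2 * (2*p) := by
    have e1 : x ^ (2*p+1) * (x ^ (-(2*p)) * x ^ (1-2*p)) = x ^ (2-2*p) := by
      rw [hpow, hpow, show -(2*p) + (1-2*p) = 1-4*p by ring,
        show 2*p+1 + (1-4*p) = 2-2*p by ring]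
    have e2 : x ^ (2*p+1) * (x ^ (1-2*p) * x ^ (-(2*p))) = x ^ (2-2*p) := by
      rw [hpow, hpow, show (1-2*p) + -(2*p) = 1-4*p by ring,
        show 2*p+1 + (1-4*p) = 2-2*p by ring]
    have e3 : x ^ (2*p+1) * x ^ (-(2*p)-1) = 1 := by
      rw [hpow, show 2*p+1 + (-(2*p)-1) = 0 by ring, Real.rpow_zero]
    calc x ^ (2*p+1) * |g3 μ σ p x|
        ≤ x ^ (2*p+1) * (2/S1 * (D2 * x ^ (-(2*p)) * (CF * x ^ (1-2*p))
            + B1 * x ^ (1-2*p) * (S1 * (c0 * x ^ (-(2*p)))))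
            + 2/σ^2 * (2*p * x ^ (-(2*p)-1))) := mul_le_mul_of_nonneg_left hg3 (hxp _)
      _ = 2/S1 * (D2 * CF) * (x ^ (2*p+1) * (x ^ (-(2*p)) * x ^ (1-2*p)))
            + 2/S1 * (B1 * (S1 * c0)) * (x ^ (2*p+1) * (x ^ (1-2*p) * x ^ (-(2*p))))
            + 2/σ^2 * (2*p) * (x ^ (2*p+1) * x ^ (-(2*p)-1)) := by ring
      _ = 2/S1 * (D2 * CF) * x ^ (2-2*p) + 2/S1 * (B1 * (S1 * c0)) * x ^ (2-2*p)
            + 2/σ^2 * (2*p) := by rw [e1, e2, e3, mul_one]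
      _ ≤ 2/S1 * (D2 * CF) * 1 + 2/S1 * (B1 * (S1 * c0)) * 1 + 2/σ^2 * (2*p) :=
          add_le_add (add_le_add
            (mul_le_mul_of_nonneg_left hxle1
              (mul_nonneg hdiv.le (mul_nonneg hD2 hCF)))
            (mul_le_mul_of_nonneg_left hxle1
              (mul_nonneg hdiv.le (mul_nonneg hB1 (mul_nonneg hS1.le hc0pos.le)))))
            le_rfl
      _ = 2/S1 * (D2 * CF + B1 * (S1 * c0)) + 2/σ^2 * (2*p) := by ring
  exact add_le_add (add_le_add T1 T2) T3

end CEVA2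

/-- Lemma A.2 (case `p ∈ (1/2,1)`): `ψ` is three times differentiable on `(0,1)` and
`sup_{x∈(0,1)} (x^{2p−1}|ψ'(x)| + x^{2p}|ψ''(x)| + x^{2p+1}|ψ'''(x)|) < ∞`. -/
theorem stmt10 (μ σ p : ℝ) (hσ : 0 < σ) (hp : 1 / 2 < p) (hp1 : p < 1) :
    (∀ x ∈ Ioo (0 : ℝ) 1,
      DifferentiableAt ℝ (psiFun μ σ p) x ∧
      DifferentiableAt ℝ (deriv (psiFun μ σ p)) x ∧
      DifferentiableAt ℝ (deriv (deriv (psiFun μ σ p))) x) ∧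
    ∃ C : ℝ, ∀ x ∈ Ioo (0 : ℝ) 1,
      x ^ (2 * p - 1) * |deriv (psiFun μ σ p) x|
        + x ^ (2 * p) * |deriv (deriv (psiFun μ σ p)) x|
        + x ^ (2 * p + 1) * |deriv (deriv (deriv (psiFun μ σ p))) x| ≤ C := by
  constructor
  · intro x hx
    refine ⟨(CEVA2.hasDerivAt_psiFun hσ hp hp1 hx).differentiableAt, ?_, ?_⟩
    · exact (CEVA2.ev1 hσ hp hp1 hx).differentiableAt_iff.mpr
        (CEVA2.hasDerivAt_g1 hσ hp hp1 hx).differentiableAt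
    · exact (CEVA2.ev2 hσ hp hp1 hx).differentiableAt_iff.mpr
        (CEVA2.hasDerivAt_g2 hσ hp hp1 hx).differentiableAt
  · obtain ⟨C, hC⟩ := CEVA2.sup_bound (μ := μ) hσ hp hp1
    refine ⟨C, fun x hx => ?_⟩
    rw [CEVA2.deriv_psiFun_eqOn hσ hp hp1 x hx, CEVA2.deriv2_psiFun hσ hp hp1 hx,
      CEVA2.deriv3_psiFun hσ hp hp1 hx]
    exact hC x hx
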